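/- Fix k ≥ 0 and the affine maps f₀(x) = 2x, f₁(x) = 2x/3 on R. There exists a bi-infinite sequence (x_n)_{n∈Z} in [1/2, 2] and (i_n) ∈ {0,1}^Z with x_{n+1} = f_{i_n}(x_n) for all n, but there is no periodic such sequence: no x ∈ [1/2,2] and finite word i_0…i_{p−1} with p ≥ 1 satisfy f_{i_{p−1}} ∘ ⋯ ∘ f_{i_0}(x) = x unless the composed map is the identity, which never happens. -/

import Mathlib

noncomputable def kariStep (x : ℝ) : ℝ := if x ≤ 1 then 2 * x else 2 * x / 3
noncomputable def kariBstep (x : ℝ) : ℝ := if 1 ≤ x then x / 2 else 3 * x / 2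

noncomputable def kariU : ℕ → ℝ
  | 0 => 1
  | n + 1 => kariStep (kariU n)

noncomputable def kariV : ℕ → ℝ
  | 0 => 1
  | n + 1 => kariBstep (kariV n)

lemma kariStep_mem {x : ℝ} (hx : x ∈ Set.Icc (1/2 : ℝ) 2) :
    kariStep x ∈ Set.Icc (1/2 : ℝ) 2 := by
  obtain ⟨h1, h2⟩ := hx
  unfold kariStep
  split <;> constructor <;> nlinarith

lemma kariBstep_mem {x : ℝ} (hx : x ∈ Set.Icc (1/2 : ℝ) 2) :
    kariBstep x ∈ Set.Icc (1/2 : ℝ) 2 := by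
  obtain ⟨h1, h2⟩ := hx
  unfold kariBstep
  split <;> constructor <;> nlinarith

lemma kariStep_rel (x : ℝ) : kariStep x = 2 * x ∨ kariStep x = 2 * x / 3 := by
  unfold kariStep; split
  · exact Or.inl rfl
  · exact Or.inr rfl

lemma kariBstep_rel (x : ℝ) : x = 2 * kariBstep x ∨ x = 2 * kariBstep x / 3 := by
  unfold kariBstep; split
  · left; ring
  · right; ring

lemma kariU_mem (n : ℕ) : kariU n ∈ Set.Icc (1/2 : ℝ) 2 := by
  induction n with
  | zero => norm_num [kariU]
  | succ n ih => exact kariStep_mem ih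

lemma kariV_mem (n : ℕ) : kariV n ∈ Set.Icc (1/2 : ℝ) 2 := by
  induction n with
  | zero => norm_num [kariV]
  | succ n ih => exact kariBstep_mem ih

noncomputable def kariX (n : ℤ) : ℝ :=
  if 0 ≤ n then kariU n.toNat else kariV (-n).toNat

lemma kariX_mem (n : ℤ) : kariX n ∈ Set.Icc (1/2 : ℝ) 2 := by
  unfold kariX; split
  · exact kariU_mem _
  · exact kariV_mem _

lemma kariX_rel (n : ℤ) : kariX (n + 1) = 2 * kariX n ∨ kariX (n + 1) = 2 * kariX n / 3 := by
  rcases le_or_gt 0 n with h | h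
  · have h1 : (0:ℤ) ≤ n + 1 := by omega
    have ht : (n + 1).toNat = n.toNat + 1 := by omega
    simp only [kariX, if_pos h, if_pos h1, ht]
    show kariStep (kariU n.toNat) = _ ∨ kariStep (kariU n.toNat) = _
    exact kariStep_rel _
  · -- n < 0; kariX n = kariBstep (kariX (n+1))
    have hb : kariX n = kariBstep (kariX (n + 1)) := by
      rcases eq_or_lt_of_le (by omega : n ≤ -1) with he | hl
      · -- n = -1
        subst he
        simp only [kariX]
        norm_num
        show kariV 1 = kariBstep (kariU 0)
        simp [kariV, kariU]
      · have h1 : ¬ (0:ℤ) ≤ n := by omega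
        have h2 : ¬ (0:ℤ) ≤ n + 1 := by omega
        have ht : (-n).toNat = (-(n+1)).toNat + 1 := by omega
        simp only [kariX, if_neg h1, if_neg h2, ht]
        rfl
    rcases kariBstep_rel (kariX (n + 1)) with h' | h'
    · left; rw [hb]; exact h'
    · right; rw [hb]; exact h'

theorem kari_orbits :
    -- a bi-infinite orbit in [1/2, 2] exists
    (∃ (x : ℤ → ℝ) (i : ℤ → Bool),
      (∀ n : ℤ, x n ∈ Set.Icc (1 / 2 : ℝ) 2) ∧
      (∀ n : ℤ, x (n + 1) = if i n then 2 * x n / 3 else 2 * x n)) ∧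
    -- but no periodic orbit
    (∀ p : ℕ, 1 ≤ p → ∀ (i : ℕ → Bool) (x : ℝ), x ∈ Set.Icc (1 / 2 : ℝ) 2 →
      ∀ y : ℕ → ℝ, y 0 = x →
        (∀ k : ℕ, k < p → y (k + 1) = if i k then 2 * y k / 3 else 2 * y k) →
        y p ≠ x) := by
  constructor
  · refine ⟨kariX, fun n => decide (kariX (n + 1) ≠ 2 * kariX n), fun n => kariX_mem n, fun n => ?_⟩
    have hx := kariX_mem n
    have hx0 : kariX n > 0 := lt_of_lt_of_le (by norm_num) hx.1
    rcases kariX_rel n with h | h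
    · simp [h, ne_eq]
    · rcases eq_or_ne (kariX (n + 1)) (2 * kariX n) with h2 | h2
      · simp [h2]
      · rw [h] at h2; rw [if_pos (by simp [h, h2])]; exact h
  · intro p hp i x hx y hy0 hstep hyp
    have hx0 : x ≠ 0 := by
      have := hx.1; intro h; rw [h] at this; norm_num at this
    have key : ∀ k ≤ p, ∃ b ≤ k, y k * 3 ^ b = x * 2 ^ k := by
      intro k hk
      induction k with
      | zero => exact ⟨0, le_refl 0, by simp [hy0]⟩
      | succ k ih =>
        obtain ⟨b, hb, hbe⟩ := ih (by omega)
        have hs := hstep k (by omega)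
        by_cases hik : i k
        · refine ⟨b + 1, by omega, ?_⟩
          rw [hs, if_pos hik]
          rw [pow_succ, pow_succ]
          nlinarith [hbe]
        · refine ⟨b, by omega, ?_⟩
          rw [hs, if_neg hik, pow_succ]
          nlinarith [hbe]
    obtain ⟨b, hb, hbe⟩ := key p le_rfl
    rw [hyp] at hbe
    have h3 : (3:ℝ) ^ b = 2 ^ p := by
      exact mul_left_cancel₀ hx0 hbe
    have hnat : (3:ℕ) ^ b = 2 ^ p := by
      have : ((3 ^ b : ℕ) : ℝ) = ((2 ^ p : ℕ) : ℝ) := by push_cast; exact h3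
      exact_mod_cast this
    have h2 : 2 ∣ 2 ^ p := dvd_pow_self 2 (by omega)
    rw [← hnat] at h2
    have := Nat.Prime.dvd_of_dvd_pow Nat.prime_two h2
    omega
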